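/- Suppose the excess entropy E = Σ_{L=1}^∞ [h_μ(L) - h_μ] converges. Then the block entropy lies below its asymptote for every L ≥ 0: H(L) ≤ E + h_μ·L. Consequently, an observer who assumes synchronization and estimates the entropy rate at block length L ≥ 1 as ĥ_μ := (H(L) - E)/L always underestimates the true entropy rate: ĥ_μ ≤ h_μ. -/

import Mathlib

open MeasureTheory Real Filter

/-- The probability of the cylinder set of sequences beginning with the word `w`. -/
noncomputable def cylP {A : Type*} [MeasurableSpace A] (μ : Measure (ℕ → A)) {L : ℕ}
    (w : Fin L → A) : ℝ :=
  (μ {x : ℕ → A | ∀ i : Fin L, x i.1 = w i}).toReal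

/-- The block entropy `H(L)` in bits, with the convention `0 · log₂ 0 = 0`;
terms with `cylP μ w = 0` contribute `0` to the sum. -/
noncomputable def blockH {A : Type*} [MeasurableSpace A] [Fintype A]
    (μ : Measure (ℕ → A)) (L : ℕ) : ℝ :=
  -∑ w : Fin L → A, cylP μ w * Real.logb 2 (cylP μ w)

/-- The left shift on one-sided sequences. -/
def shift {A : Type*} : (ℕ → A) → (ℕ → A) := fun x n => x (n + 1)

set_option linter.unusedSectionVars false
set_option linter.unusedVariables false
set_option linter.deprecated false

/-- Gibbs' inequality. -/
lemma gibbs {ι : Type*} (s : Finset ι) (p q : ι → ℝ)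
    (hp : ∀ i ∈ s, 0 < p i) (hq : ∀ i ∈ s, 0 < q i)
    (h : ∑ i ∈ s, q i ≤ ∑ i ∈ s, p i) :
    ∑ i ∈ s, p i * Real.logb 2 (q i) ≤ ∑ i ∈ s, p i * Real.logb 2 (p i) := by
  have h2 : (0:ℝ) < Real.log 2 := Real.log_pos one_lt_two
  have key : ∀ i ∈ s,
      p i * Real.logb 2 (q i) - p i * Real.logb 2 (p i) ≤ (q i - p i) / Real.log 2 := by
    intro i hi
    have hpi := hp i hi; have hqi := hq i hi
    have hlog : Real.log (q i) - Real.log (p i) ≤ q i / p i - 1 := by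
      have := Real.log_le_sub_one_of_pos (div_pos hqi hpi)
      rwa [Real.log_div hqi.ne' hpi.ne'] at this
    have h1 : p i * (Real.log (q i) - Real.log (p i)) ≤ q i - p i := by
      have := mul_le_mul_of_nonneg_left hlog hpi.le
      have h3 : p i * (q i / p i - 1) = q i - p i := by field_simp
      linarith
    have heq : p i * Real.logb 2 (q i) - p i * Real.logb 2 (p i)
        = p i * (Real.log (q i) - Real.log (p i)) / Real.log 2 := by
      rw [Real.logb, Real.logb]; ring
    rw [heq]
    gcongr
  have hsum := Finset.sum_le_sum key
  rw [Finset.sum_sub_distrib] at hsum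
  have h3 : ∑ i ∈ s, (q i - p i) / Real.log 2
      = (∑ i ∈ s, q i - ∑ i ∈ s, p i) / Real.log 2 := by
    rw [← Finset.sum_div, Finset.sum_sub_distrib]
  rw [h3] at hsum
  have h4 : (∑ i ∈ s, q i - ∑ i ∈ s, p i) / Real.log 2 ≤ 0 :=
    div_nonpos_of_nonpos_of_nonneg (by linarith) h2.le
  linarith

section lemmas
variable {A : Type*} [MeasurableSpace A] [MeasurableSingletonClass A] [Fintype A]
variable (μ : Measure (ℕ → A)) [IsProbabilityMeasure μ]

lemma measurableSet_cyl {L : ℕ} (w : Fin L → A) :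
    MeasurableSet {x : ℕ → A | ∀ i : Fin L, x i.1 = w i} := by
  have : {x : ℕ → A | ∀ i : Fin L, x i.1 = w i}
      = ⋂ i : Fin L, (fun x : ℕ → A => x i.1) ⁻¹' {w i} := by
    ext x; simp [Set.mem_iInter]
  rw [this]
  exact MeasurableSet.iInter fun i => (measurable_pi_apply i.1) (measurableSet_singleton _)

lemma cylP_nonneg {L : ℕ} (w : Fin L → A) : 0 ≤ cylP μ w := ENNReal.toReal_nonneg

lemma toReal_measure_iUnion {s : A → Set (ℕ → A)} (hm : ∀ a, MeasurableSet (s a))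
    (hd : Pairwise (Function.onFun Disjoint s)) :
    (μ (⋃ a : A, s a)).toReal = ∑ a : A, (μ (s a)).toReal := by
  rw [measure_iUnion hd hm, tsum_fintype, ENNReal.toReal_sum (fun a _ => measure_ne_top μ _)]

lemma cylP_snoc {L : ℕ} (w : Fin L → A) :
    cylP μ w = ∑ a : A, cylP μ (Fin.snoc w a) := by
  have hset : {x : ℕ → A | ∀ i : Fin L, x i.1 = w i}
      = ⋃ a : A, {x : ℕ → A | ∀ i : Fin (L+1), x i.1 = (Fin.snoc w a : Fin (L+1) → A) i} := by
    ext x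
    simp only [Set.mem_setOf_eq, Set.mem_iUnion]
    constructor
    · intro h
      refine ⟨x L, fun i => ?_⟩
      refine Fin.lastCases ?_ (fun j => ?_) i
      · simp [Fin.snoc_last]
      · simpa [Fin.snoc_castSucc] using h j
    · rintro ⟨a, h⟩ i
      simpa [Fin.snoc_castSucc] using h i.castSucc
  rw [cylP, hset, toReal_measure_iUnion μ (fun a => measurableSet_cyl _)]
  · rfl
  · intro a b hab
    rw [Function.onFun, Set.disjoint_left]
    intro x hxa hxb
    apply hab
    have ha := hxa (Fin.last L); have hb := hxb (Fin.last L)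
    simp only [Fin.snoc_last] at ha hb
    rw [← ha, ← hb]

lemma cylP_shiftset (hstat : MeasurePreserving (shift (A := A)) μ μ) {L : ℕ} (w : Fin L → A) :
    (μ {x : ℕ → A | ∀ i : Fin L, x (i.1+1) = w i}).toReal = cylP μ w := by
  have : {x : ℕ → A | ∀ i : Fin L, x (i.1+1) = w i}
      = shift ⁻¹' {x : ℕ → A | ∀ i : Fin L, x i.1 = w i} := rfl
  rw [cylP, this, hstat.measure_preimage (measurableSet_cyl w).nullMeasurableSet]

lemma cylP_cons (hstat : MeasurePreserving (shift (A := A)) μ μ) {L : ℕ} (w : Fin L → A) :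
    cylP μ w = ∑ a : A, cylP μ (Fin.cons a w) := by
  rw [← cylP_shiftset μ hstat w]
  have hset : {x : ℕ → A | ∀ i : Fin L, x (i.1+1) = w i}
      = ⋃ a : A, {x : ℕ → A | ∀ i : Fin (L+1), x i.1 = (Fin.cons a w : Fin (L+1) → A) i} := by
    ext x
    simp only [Set.mem_setOf_eq, Set.mem_iUnion]
    constructor
    · intro h
      refine ⟨x 0, fun i => ?_⟩
      refine Fin.cases ?_ (fun j => ?_) i
      · simp
      · simpa using h j
    · rintro ⟨a, h⟩ i
      simpa using h i.succ
  rw [hset, toReal_measure_iUnion μ (fun a => measurableSet_cyl _)]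
  · rfl
  · intro a b hab
    rw [Function.onFun, Set.disjoint_left]
    intro x hxa hxb
    apply hab
    have ha := hxa 0; have hb := hxb 0
    simp only [Fin.cons_zero] at ha hb
    rw [← ha, ← hb]

lemma cylP_snoc_le {L : ℕ} (w : Fin L → A) (a : A) : cylP μ (Fin.snoc w a) ≤ cylP μ w := by
  rw [cylP_snoc μ w]
  exact Finset.single_le_sum (f := fun b => cylP μ (Fin.snoc w b))
    (fun b _ => cylP_nonneg μ _) (Finset.mem_univ a)

lemma cylP_cons_le (hstat : MeasurePreserving (shift (A := A)) μ μ) {L : ℕ} (w : Fin L → A)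
    (a : A) : cylP μ (Fin.cons a w) ≤ cylP μ w := by
  rw [cylP_cons μ hstat w]
  exact Finset.single_le_sum (f := fun b => cylP μ (Fin.cons b w))
    (fun b _ => cylP_nonneg μ _) (Finset.mem_univ a)

/-- `Fin.snoc` as an equivalence. -/
def snocE (A : Type*) (L : ℕ) : ((Fin L → A) × A) ≃ (Fin (L+1) → A) where
  toFun p := Fin.snoc p.1 p.2
  invFun f := (Fin.init f, f (Fin.last L))
  left_inv p := by simp
  right_inv f := by simp

/-- `Fin.cons` as an equivalence. -/
def consE (A : Type*) (L : ℕ) : (A × (Fin L → A)) ≃ (Fin (L+1) → A) where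
  toFun p := Fin.cons p.1 p.2
  invFun f := (f 0, Fin.tail f)
  left_inv p := by simp
  right_inv f := by simp [Fin.cons_self_tail]

lemma sum_cylP : ∀ L : ℕ, ∑ w : Fin L → A, cylP μ w = 1 := by
  intro L
  induction L with
  | zero =>
    have h1 : ∀ w : Fin 0 → A, cylP μ w = 1 := by
      intro w
      have : {x : ℕ → A | ∀ i : Fin 0, x i.1 = w i} = Set.univ := by
        ext x; simp
      simp [cylP, this]
    rw [Finset.sum_congr rfl (fun w _ => h1 w)]
    simp
  | succ L ih =>
    rw [← Equiv.sum_comp (snocE A L) (cylP μ), Fintype.sum_prod_type]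
    calc ∑ u : Fin L → A, ∑ a : A, cylP μ (snocE A L (u, a))
        = ∑ u : Fin L → A, cylP μ u := by
          refine Finset.sum_congr rfl (fun u _ => ?_)
          exact (cylP_snoc μ u).symm
      _ = 1 := ih

lemma blockH_zero : blockH μ 0 = 0 := by
  rw [blockH]
  have h1 : ∀ w : Fin 0 → A, cylP μ w = 1 := by
    intro w
    have : {x : ℕ → A | ∀ i : Fin 0, x i.1 = w i} = Set.univ := by ext x; simp
    simp [cylP, this]
  rw [Finset.sum_congr rfl (fun w _ => by rw [h1 w])]
  simp


@[simp] lemma snocE_apply {A : Type*} {L : ℕ} (p : (Fin L → A) × A) :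
    snocE A L p = Fin.snoc p.1 p.2 := rfl

@[simp] lemma consE_apply {A : Type*} {L : ℕ} (p : A × (Fin L → A)) :
    consE A L p = Fin.cons p.1 p.2 := rfl

lemma blockH_concave (hstat : MeasurePreserving (shift (A := A)) μ μ) (L : ℕ) :
    blockH μ (L+2) + blockH μ L ≤ blockH μ (L+1) + blockH μ (L+1) := by
  classical
  -- triple index: (x, (y, z)) ↔ word  x ⬝ y ⬝ z  of length L+2
  set P : A × ((Fin L → A) × A) → ℝ :=
    fun t => cylP μ (Fin.cons t.1 (Fin.snoc t.2.1 t.2.2)) with hPdef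
  set pXY : A × ((Fin L → A) × A) → ℝ := fun t => cylP μ (Fin.cons t.1 t.2.1) with hXYdef
  set pYZ : A × ((Fin L → A) × A) → ℝ := fun t => cylP μ (Fin.snoc t.2.1 t.2.2) with hYZdef
  set pY : A × ((Fin L → A) × A) → ℝ := fun t => cylP μ t.2.1 with hYdef
  set Q : A × ((Fin L → A) × A) → ℝ := fun t => pXY t * pYZ t / pY t with hQdef
  have hPnn : ∀ t, 0 ≤ P t := by intro t; simp only [hPdef]; exact cylP_nonneg μ _
  have hXYnn : ∀ t, 0 ≤ pXY t := by intro t; simp only [hXYdef]; exact cylP_nonneg μ _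
  have hYZnn : ∀ t, 0 ≤ pYZ t := by intro t; simp only [hYZdef]; exact cylP_nonneg μ _
  have hYnn : ∀ t, 0 ≤ pY t := by intro t; simp only [hYdef]; exact cylP_nonneg μ _
  have hQnn : ∀ t, 0 ≤ Q t := by
    intro t; simp only [hQdef]
    exact div_nonneg (mul_nonneg (hXYnn t) (hYZnn t)) (hYnn t)
  -- pointwise domination
  have hPXY : ∀ t, P t ≤ pXY t := by
    intro t
    simp only [hPdef, hXYdef, Fin.cons_snoc_eq_snoc_cons]
    exact cylP_snoc_le μ _ _
  have hPYZ : ∀ t, P t ≤ pYZ t := by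
    intro t
    simp only [hPdef, hYZdef]
    exact cylP_cons_le μ hstat _ _
  have hXYY : ∀ t, pXY t ≤ pY t := by
    intro t
    simp only [hXYdef, hYdef]
    exact cylP_cons_le μ hstat _ _
  -- marginals
  have m1 : ∀ (x : A) (y : Fin L → A), ∑ z : A, P (x, (y, z)) = cylP μ (Fin.cons x y) := by
    intro x y
    simp only [hPdef, Fin.cons_snoc_eq_snoc_cons]
    exact (cylP_snoc μ _).symm
  have m2 : ∀ (y : Fin L → A) (z : A), ∑ x : A, P (x, (y, z)) = cylP μ (Fin.snoc y z) := by
    intro y z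
    simp only [hPdef]
    exact (cylP_cons μ hstat _).symm
  -- the four sum identities
  have E1 : ∑ t, P t * Real.logb 2 (P t)
      = ∑ w : Fin (L+2) → A, cylP μ w * Real.logb 2 (cylP μ w) := by
    have he : ∀ t : A × ((Fin L → A) × A),
        (((Equiv.refl A).prodCongr (snocE A L)).trans (consE A (L+1))) t
          = Fin.cons t.1 (Fin.snoc t.2.1 t.2.2) := fun t => rfl
    rw [← Equiv.sum_comp (((Equiv.refl A).prodCongr (snocE A L)).trans (consE A (L+1)))
      (fun w => cylP μ w * Real.logb 2 (cylP μ w))]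
    refine Finset.sum_congr rfl (fun t _ => ?_)
    rw [he t]
  have E2 : ∑ t, P t * Real.logb 2 (pXY t)
      = ∑ u : Fin (L+1) → A, cylP μ u * Real.logb 2 (cylP μ u) := by
    rw [Fintype.sum_prod_type]
    have hx : ∀ x : A, ∑ p : (Fin L → A) × A, P (x, p) * Real.logb 2 (pXY (x, p))
        = ∑ y : Fin L → A, cylP μ (Fin.cons x y) * Real.logb 2 (cylP μ (Fin.cons x y)) := by
      intro x
      rw [Fintype.sum_prod_type]
      refine Finset.sum_congr rfl (fun y _ => ?_)
      have h1 : ∀ z : A, P (x, (y, z)) * Real.logb 2 (pXY (x, (y, z)))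
          = P (x, (y, z)) * Real.logb 2 (cylP μ (Fin.cons x y)) := by
        intro z; simp only [hXYdef]
      rw [Finset.sum_congr rfl (fun z _ => h1 z), ← Finset.sum_mul, m1 x y]
    rw [Finset.sum_congr rfl (fun x _ => hx x)]
    have := Equiv.sum_comp (consE A L) (fun u => cylP μ u * Real.logb 2 (cylP μ u))
    simp only [consE_apply] at this
    rw [← this, Fintype.sum_prod_type]
  have E3 : ∑ t, P t * Real.logb 2 (pYZ t)
      = ∑ u : Fin (L+1) → A, cylP μ u * Real.logb 2 (cylP μ u) := by
    rw [Fintype.sum_prod_type, Finset.sum_comm]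
    have hp : ∀ p : (Fin L → A) × A, ∑ x : A, P (x, p) * Real.logb 2 (pYZ (x, p))
        = cylP μ (Fin.snoc p.1 p.2) * Real.logb 2 (cylP μ (Fin.snoc p.1 p.2)) := by
      intro p
      have h1 : ∀ x : A, P (x, p) * Real.logb 2 (pYZ (x, p))
          = P (x, p) * Real.logb 2 (cylP μ (Fin.snoc p.1 p.2)) := by
        intro x; simp only [hYZdef]
      rw [Finset.sum_congr rfl (fun x _ => h1 x), ← Finset.sum_mul, m2 p.1 p.2]
    rw [Finset.sum_congr rfl (fun p _ => hp p)]
    have := Equiv.sum_comp (snocE A L) (fun u => cylP μ u * Real.logb 2 (cylP μ u))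
    simp only [snocE_apply] at this
    exact this
  have E4 : ∑ t, P t * Real.logb 2 (pY t)
      = ∑ y : Fin L → A, cylP μ y * Real.logb 2 (cylP μ y) := by
    rw [Fintype.sum_prod_type, Finset.sum_comm, Fintype.sum_prod_type]
    refine Finset.sum_congr rfl (fun y _ => ?_)
    have h1 : ∀ (z x : A), P (x, (y, z)) * Real.logb 2 (pY (x, (y, z)))
        = P (x, (y, z)) * Real.logb 2 (cylP μ y) := by
      intro z x; simp only [hYdef]
    calc ∑ z : A, ∑ x : A, P (x, (y, z)) * Real.logb 2 (pY (x, (y, z)))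
        = ∑ z : A, (∑ x : A, P (x, (y, z))) * Real.logb 2 (cylP μ y) := by
          refine Finset.sum_congr rfl (fun z _ => ?_)
          rw [Finset.sum_congr rfl (fun x _ => h1 z x), ← Finset.sum_mul]
      _ = ∑ z : A, cylP μ (Fin.snoc y z) * Real.logb 2 (cylP μ y) := by
          refine Finset.sum_congr rfl (fun z _ => ?_)
          rw [m2 y z]
      _ = cylP μ y * Real.logb 2 (cylP μ y) := by
          rw [← Finset.sum_mul, ← cylP_snoc μ y]
  -- total mass
  have hPsum : ∑ t, P t = 1 := by
    rw [Fintype.sum_prod_type, Finset.sum_comm]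
    have h : ∀ p : (Fin L → A) × A, ∑ x : A, P (x, p) = cylP μ (Fin.snoc p.1 p.2) :=
      fun p => m2 p.1 p.2
    rw [Finset.sum_congr rfl (fun p _ => h p)]
    have := Equiv.sum_comp (snocE A L) (cylP μ)
    simp only [snocE_apply] at this
    rw [this]
    exact sum_cylP μ (L+1)
  have hQsum : ∑ t, Q t ≤ 1 := by
    rw [Fintype.sum_prod_type, Finset.sum_comm, Fintype.sum_prod_type]
    calc ∑ y : Fin L → A, ∑ z : A, ∑ x : A, Q (x, (y, z))
        ≤ ∑ y : Fin L → A, cylP μ y := by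
          refine Finset.sum_le_sum (fun y _ => ?_)
          by_cases hy : cylP μ y = 0
          · have hz : ∀ z x : A, Q (x, (y, z)) = 0 := by
              intro z x
              have h0 : pXY (x, (y, z)) = 0 := by
                refine le_antisymm ?_ (hXYnn _)
                have := hXYY (x, (y, z))
                simp only [hYdef] at this
                simpa [hy] using this
              simp [hQdef, h0]
            have hz2 : ∀ z : A, ∑ x : A, Q (x, (y, z)) = 0 := by
              intro z
              rw [Finset.sum_congr rfl (fun x _ => hz z x)]
              simp
            rw [Finset.sum_congr rfl (fun z _ => hz2 z)]
            simp [cylP_nonneg μ y]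
          · have hz : ∀ z : A, ∑ x : A, Q (x, (y, z))
                = cylP μ (Fin.snoc y z) * (cylP μ y / cylP μ y) := by
              intro z
              have h1 : ∀ x : A, Q (x, (y, z))
                  = cylP μ (Fin.cons x y) * (cylP μ (Fin.snoc y z) / cylP μ y) := by
                intro x
                simp only [hQdef, hXYdef, hYZdef, hYdef]
                ring
              rw [Finset.sum_congr rfl (fun x _ => h1 x), ← Finset.sum_mul,
                ← cylP_cons μ hstat y]
              ring
            rw [Finset.sum_congr rfl (fun z _ => hz z), ← Finset.sum_mul,
              ← cylP_snoc μ y, div_self hy, mul_one]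
      _ = 1 := sum_cylP μ L
  -- Gibbs on the support of P
  set s : Finset (A × ((Fin L → A) × A)) := Finset.univ.filter (fun t => P t ≠ 0) with hsdef
  have hPpos : ∀ t ∈ s, 0 < P t := by
    intro t ht
    rw [hsdef, Finset.mem_filter] at ht
    exact lt_of_le_of_ne (hPnn t) (Ne.symm ht.2)
  have hXYpos : ∀ t ∈ s, 0 < pXY t := fun t ht => lt_of_lt_of_le (hPpos t ht) (hPXY t)
  have hYZpos : ∀ t ∈ s, 0 < pYZ t := fun t ht => lt_of_lt_of_le (hPpos t ht) (hPYZ t)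
  have hYpos : ∀ t ∈ s, 0 < pY t := fun t ht => lt_of_lt_of_le (hXYpos t ht) (hXYY t)
  have hQpos : ∀ t ∈ s, 0 < Q t := by
    intro t ht
    simp only [hQdef]
    exact div_pos (mul_pos (hXYpos t ht) (hYZpos t ht)) (hYpos t ht)
  have hsP : ∑ t ∈ s, P t = ∑ t, P t := by
    rw [hsdef]
    exact Finset.sum_filter_ne_zero Finset.univ
  have hsQ : ∑ t ∈ s, Q t ≤ ∑ t ∈ s, P t := by
    calc ∑ t ∈ s, Q t ≤ ∑ t, Q t :=
          Finset.sum_le_sum_of_subset_of_nonneg (Finset.subset_univ s)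
            (fun t _ _ => hQnn t)
      _ ≤ 1 := hQsum
      _ = ∑ t ∈ s, P t := by rw [hsP, hPsum]
  have hgibbs := gibbs s P Q hPpos hQpos hsQ
  -- expand logb Q on s
  have hexp : ∑ t ∈ s, P t * Real.logb 2 (Q t)
      = ∑ t ∈ s, (P t * Real.logb 2 (pXY t) + P t * Real.logb 2 (pYZ t)
          - P t * Real.logb 2 (pY t)) := by
    refine Finset.sum_congr rfl (fun t ht => ?_)
    rw [hQdef]
    rw [Real.logb_div (mul_ne_zero (hXYpos t ht).ne' (hYZpos t ht).ne') (hYpos t ht).ne',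
      Real.logb_mul (hXYpos t ht).ne' (hYZpos t ht).ne']
    ring
  rw [hexp] at hgibbs
  rw [Finset.sum_sub_distrib, Finset.sum_add_distrib] at hgibbs
  -- remove the filter everywhere
  have hrm : ∀ g : A × ((Fin L → A) × A) → ℝ,
      ∑ t ∈ s, P t * g t = ∑ t, P t * g t := by
    intro g
    rw [hsdef]
    refine Finset.sum_filter_of_ne (fun t _ h => ?_)
    intro h0
    exact h (by rw [h0, zero_mul])
  rw [hrm (fun t => Real.logb 2 (pXY t)), hrm (fun t => Real.logb 2 (pYZ t)),
    hrm (fun t => Real.logb 2 (pY t)), hrm (fun t => Real.logb 2 (P t))] at hgibbs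
  rw [E1, E2, E3, E4] at hgibbs
  simp only [blockH]
  linarith

end lemmas



/-- If the excess entropy `E = Σ_{L=1}^∞ [h_μ(L) - h_μ]` converges, then
`H(L) ≤ E + h_μ·L` for every `L ≥ 0`; consequently the assumed-synchronization
entropy-rate estimate `ĥ_μ = (H(L) - E)/L` underestimates `h_μ` for every `L ≥ 1`. -/
theorem assumed_synchronization_underestimates_entropy_rate
    {A : Type*} [MeasurableSpace A] [MeasurableSingletonClass A] [Fintype A]
    (hA : 2 ≤ Fintype.card A)
    (μ : Measure (ℕ → A)) [IsProbabilityMeasure μ]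
    (hstat : MeasurePreserving (shift (A := A)) μ μ)
    (hμ : ℝ) (hrate : Tendsto (fun L : ℕ => blockH μ L / L) atTop (nhds hμ))
    (E : ℝ)
    (hE : Tendsto (fun N : ℕ => ∑ L ∈ Finset.range N, (blockH μ (L + 1) - blockH μ L - hμ))
      atTop (nhds E)) :
    (∀ L : ℕ, blockH μ L ≤ E + hμ * L) ∧
    (∀ L : ℕ, 1 ≤ L → (blockH μ L - E) / L ≤ hμ) := by
  classical
  set S : ℕ → ℝ := fun N => ∑ L ∈ Finset.range N, (blockH μ (L + 1) - blockH μ L - hμ)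
    with hS
  set D : ℕ → ℝ := fun L => blockH μ (L + 1) - blockH μ L - hμ with hD
  have hanti : Antitone D := by
    apply antitone_nat_of_succ_le
    intro n
    have h := blockH_concave μ hstat n
    simp only [hD]
    rw [show n + 1 + 1 = n + 2 from rfl]
    linarith
  have hterm : Tendsto D atTop (nhds 0) := by
    have h1 : D = fun L => S (L + 1) - S L := by
      funext L
      simp only [hD, hS, Finset.sum_range_succ]
      ring
    rw [h1]
    have h2 : Tendsto (fun L : ℕ => S (L + 1)) atTop (nhds E) :=
      hE.comp (tendsto_add_atTop_nat 1)
    simpa using h2.sub hE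
  have hDge : ∀ L, 0 ≤ D L := fun L => hanti.le_of_tendsto hterm L
  have hmono : Monotone S := by
    apply monotone_nat_of_le_succ
    intro n
    simp only [hS, Finset.sum_range_succ]
    have := hDge n
    simp only [hD] at this
    linarith
  have hSle : ∀ N, S N ≤ E := fun N => hmono.ge_of_tendsto hE N
  have htel : ∀ N, S N = blockH μ N - hμ * N := by
    intro N
    induction N with
    | zero => simp [hS, blockH_zero μ]
    | succ n ih =>
      simp only [hS, Finset.sum_range_succ] at ih ⊢
      push_cast
      linarith
  constructor
  · intro L
    have h := hSle L
    rw [htel L] at h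
    linarith
  · intro L hL
    have hLpos : (0:ℝ) < L := by exact_mod_cast Nat.lt_of_lt_of_le Nat.zero_lt_one hL
    rw [div_le_iff₀ hLpos]
    have h := hSle L
    rw [htel L] at h
    linarith
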